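/- A sublattice of R^n of codimension m contains at least n − 2m and at most n − m of the standard unit vectors. -/

import Mathlib

open Module Set Finset

section aux

variable {n : ℕ}

private lemma stmt16_inf_mem (Y : Submodule ℝ (Fin n → ℝ))
    (hlat : ∀ x ∈ Y, ∀ y ∈ Y, x ⊔ y ∈ Y)
    {x y : Fin n → ℝ} (hx : x ∈ Y) (hy : y ∈ Y) : x ⊓ y ∈ Y := by
  have h : x ⊓ y = -((-x) ⊔ (-y)) := by rw [neg_sup, neg_neg, neg_neg]
  rw [h]
  exact Y.neg_mem (hlat _ (Y.neg_mem hx) _ (Y.neg_mem hy))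

open scoped Classical in
private noncomputable def stmt16_supp (x : Fin n → ℝ) : Finset (Fin n) :=
  Finset.univ.filter (fun i => x i ≠ 0)

private lemma stmt16_mem_supp {x : Fin n → ℝ} {i : Fin n} :
    i ∈ stmt16_supp x ↔ x i ≠ 0 := by
  classical
  simp [stmt16_supp]

/-- Existence of a minimal-support positive element with the scaling property. -/
private lemma stmt16_exists_min (Y : Submodule ℝ (Fin n → ℝ))
    (hlat : ∀ x ∈ Y, ∀ y ∈ Y, x ⊔ y ∈ Y) (hY : Y ≠ ⊥) :
    ∃ u, u ∈ Y ∧ 0 ≤ u ∧ u ≠ 0 ∧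
      ∀ x ∈ Y, ∃ c : ℝ, ∀ i, u i ≠ 0 → x i = c * u i := by
  classical
  -- there is a nonzero positive element
  obtain ⟨x0, hx0Y, hx0⟩ : ∃ x0 ∈ Y, x0 ≠ 0 := by
    by_contra h
    push_neg at h
    apply hY
    ext x
    simp only [Submodule.mem_bot]
    exact ⟨fun hx => h x hx, fun hx => hx ▸ Y.zero_mem⟩
  have hpos : ∃ p, p ∈ Y ∧ 0 ≤ p ∧ p ≠ 0 := by
    rcases eq_or_ne (x0 ⊔ 0) 0 with h1 | h1
    · refine ⟨(-x0) ⊔ 0, hlat _ (Y.neg_mem hx0Y) _ Y.zero_mem, le_sup_right, ?_⟩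
      intro h2
      apply hx0
      ext i
      have e1 : x0 i ⊔ 0 = 0 := by simpa using congrFun h1 i
      have e2 : -x0 i ⊔ 0 = 0 := by simpa using congrFun h2 i
      have l1 : x0 i ≤ 0 := sup_eq_right.mp e1
      have l2 : -x0 i ≤ 0 := sup_eq_right.mp e2
      simp only [Pi.zero_apply]
      linarith
    · exact ⟨x0 ⊔ 0, hlat _ hx0Y _ Y.zero_mem, le_sup_right, h1⟩
  -- choose minimal support cardinality
  obtain ⟨p0, hp0Y, hp0pos, hp0ne⟩ := hpos
  have hPex : ∃ c : ℕ, ∃ p, p ∈ Y ∧ 0 ≤ p ∧ p ≠ 0 ∧ (stmt16_supp p).card = c :=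
    ⟨_, p0, hp0Y, hp0pos, hp0ne, rfl⟩
  set c0 := Nat.find hPex with hc0
  obtain ⟨u, huY, hupos, hune, hucard⟩ := Nat.find_spec hPex
  have hmin : ∀ q, q ∈ Y → 0 ≤ q → q ≠ 0 → (stmt16_supp u).card ≤ (stmt16_supp q).card := by
    intro q hqY hqpos hqne
    rw [hucard]
    exact Nat.find_le ⟨q, hqY, hqpos, hqne, rfl⟩
  -- key sub-lemma: positive elements supported in supp u are multiples of u
  have hkey : ∀ w, w ∈ Y → 0 ≤ w → (stmt16_supp w ⊆ stmt16_supp u) → ∃ c : ℝ, w = c • u := by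
    intro w hwY hwpos hwsub
    rcases eq_or_ne w 0 with rfl | hwne
    · exact ⟨0, by simp⟩
    have hsuppeq : stmt16_supp w = stmt16_supp u :=
      Finset.eq_of_subset_of_card_le hwsub (hmin w hwY hwpos hwne)
    have hne : (stmt16_supp u).Nonempty := by
      rw [← hsuppeq]
      rcases Function.ne_iff.mp hwne with ⟨i, hi⟩
      exact ⟨i, stmt16_mem_supp.mpr (by simpa using hi)⟩
    obtain ⟨i₀, hi₀, ht⟩ := Finset.exists_mem_eq_inf' hne (fun i => w i / u i)
    set t := (stmt16_supp u).inf' hne (fun i => w i / u i) with htdef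
    have hu_pos : ∀ i ∈ stmt16_supp u, 0 < u i := fun i hi =>
      lt_of_le_of_ne (hupos i) (Ne.symm (stmt16_mem_supp.mp hi))
    have hw_pos : ∀ i ∈ stmt16_supp u, 0 < w i := fun i hi =>
      lt_of_le_of_ne (hwpos i) (Ne.symm (stmt16_mem_supp.mp (hsuppeq ▸ hi)))
    have hv : w - t • u = 0 := by
      by_contra hvne
      have hvY : w - t • u ∈ Y := Y.sub_mem hwY (Y.smul_mem t huY)
      have hvpos : 0 ≤ w - t • u := by
        intro i
        simp only [Pi.sub_apply, Pi.smul_apply, Pi.zero_apply, smul_eq_mul]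
        by_cases hi : i ∈ stmt16_supp u
        · have : t ≤ w i / u i := Finset.inf'_le _ hi
          have := (div_le_div_iff_of_pos_right (hu_pos i hi)).mpr this
          rw [mul_comm] at *
          nlinarith [hu_pos i hi, this, mul_div_cancel₀ (w i) (ne_of_gt (hu_pos i hi))]
        · have hui : u i = 0 := by simpa [stmt16_mem_supp] using hi
          have hwi : w i = 0 := by
            by_contra hwi
            exact hi (hsuppeq ▸ stmt16_mem_supp.mpr hwi)
          simp [hui, hwi]
      have hvsub : stmt16_supp (w - t • u) ⊆ stmt16_supp u := by
        intro i hi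
        rw [stmt16_mem_supp] at hi ⊢
        intro hui
        apply hi
        have hwi : w i = 0 := by
          by_contra hwi
          exact stmt16_mem_supp.mp (hsuppeq ▸ stmt16_mem_supp.mpr hwi) hui
        simp [hwi, hui]
      have hvi₀ : (w - t • u) i₀ = 0 := by
        have : t = w i₀ / u i₀ := ht
        simp only [Pi.sub_apply, Pi.smul_apply, smul_eq_mul]
        rw [this, div_mul_cancel₀ _ (ne_of_gt (hu_pos i₀ hi₀))]
        ring
      have hcard : (stmt16_supp (w - t • u)).card < (stmt16_supp u).card := by
        apply Finset.card_lt_card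
        constructor
        · exact hvsub
        · intro hsub
          exact (stmt16_mem_supp.mp (hsub hi₀)) hvi₀
      exact absurd (hmin _ hvY hvpos hvne) (not_le.mpr hcard)
    exact ⟨t, by rw [← sub_eq_zero]; exact hv⟩
  refine ⟨u, huY, hupos, hune, ?_⟩
  -- decomposition: positive elements first
  have hdecpos : ∀ p, p ∈ Y → 0 ≤ p → ∃ c : ℝ, ∀ i, u i ≠ 0 → p i = c * u i := by
    intro p hpY hppos
    set s : ℝ := ∑ i, p i / u i with hs
    have hsbound : ∀ i, u i ≠ 0 → p i ≤ s * u i := by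
      intro i hui
      have hui' : 0 < u i := lt_of_le_of_ne (hupos i) (Ne.symm hui)
      have h1 : p i / u i ≤ s := by
        apply Finset.single_le_sum (f := fun i => p i / u i) (fun j _ => div_nonneg (hppos j) (hupos j)) (Finset.mem_univ i)
      calc p i = (p i / u i) * u i := by field_simp
        _ ≤ s * u i := by nlinarith
    have hsnn : 0 ≤ s := Finset.sum_nonneg (fun j _ => div_nonneg (hppos j) (hupos j))
    set w := p ⊓ (s • u) with hw
    have hwY : w ∈ Y := stmt16_inf_mem Y hlat hpY (Y.smul_mem s huY)
    have hwpos : 0 ≤ w := le_inf hppos (fun i => by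
      simp only [Pi.smul_apply, Pi.zero_apply, smul_eq_mul]
      exact mul_nonneg hsnn (hupos i))
    have hwsub : stmt16_supp w ⊆ stmt16_supp u := by
      intro i hi
      rw [stmt16_mem_supp] at hi ⊢
      intro hui
      apply hi
      have : w i = min (p i) (s * u i) := by simp [hw]
      rw [this, hui, mul_zero]
      exact min_eq_right (hppos i)
    obtain ⟨c, hc⟩ := hkey w hwY hwpos hwsub
    refine ⟨c, fun i hui => ?_⟩
    have hwi : w i = p i := by
      have : w i = min (p i) (s * u i) := by simp [hw]
      rw [this, min_eq_left (hsbound i hui)]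
    have := congrFun hc i
    simp only [Pi.smul_apply, smul_eq_mul] at this
    rw [← hwi, this]
  -- general elements
  intro x hxY
  obtain ⟨c1, hc1⟩ := hdecpos (x ⊔ 0) (hlat _ hxY _ Y.zero_mem) le_sup_right
  obtain ⟨c2, hc2⟩ := hdecpos ((-x) ⊔ 0) (hlat _ (Y.neg_mem hxY) _ Y.zero_mem) le_sup_right
  refine ⟨c1 - c2, fun i hui => ?_⟩
  have h1 := hc1 i hui
  have h2 := hc2 i hui
  simp only [Pi.sup_apply, Pi.zero_apply, Pi.neg_apply] at h1 h2
  have : x i = max (x i) 0 - max (-x i) 0 := by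
    rcases le_total (x i) 0 with h | h
    · rw [max_eq_right h, max_eq_left (by linarith)]; ring
    · rw [max_eq_left h, max_eq_right (by linarith)]; ring
  rw [this, h1, h2]; ring

end aux

private lemma stmt16_structure : ∀ (d : ℕ) {n : ℕ} (Y : Submodule ℝ (Fin n → ℝ)),
    Module.finrank ℝ Y = d →
    (∀ x ∈ Y, ∀ y ∈ Y, x ⊔ y ∈ Y) →
    ∃ u : Fin d → (Fin n → ℝ),
      (∀ j, u j ∈ Y) ∧ (∀ j, 0 ≤ u j) ∧ (∀ j, u j ≠ 0) ∧
      (∀ j j', j ≠ j' → ∀ i, u j i = 0 ∨ u j' i = 0) ∧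
      ∀ x ∈ Y, x ∈ Submodule.span ℝ (Set.range u) := by
  intro d
  induction d with
  | zero =>
    intro n Y hd _
    have hbot : Y = ⊥ := Submodule.finrank_eq_zero.mp hd
    refine ⟨Fin.elim0, fun j => j.elim0, fun j => j.elim0, fun j => j.elim0,
      fun j j' h => j.elim0, fun x hx => ?_⟩
    rw [hbot, Submodule.mem_bot] at hx
    rw [hx]
    exact Submodule.zero_mem _
  | succ d ih =>
    intro n Y hd hlat
    have hY : Y ≠ ⊥ := by
      intro h
      rw [h, finrank_bot] at hd
      omega
    obtain ⟨u, huY, hupos, hune, hdec⟩ := stmt16_exists_min Y hlat hY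
    -- the sublattice of elements vanishing on supp u
    set Y₀ : Submodule ℝ (Fin n → ℝ) :=
      Y ⊓ (⨅ i ∈ {i : Fin n | u i ≠ 0}, LinearMap.ker (LinearMap.proj i (R := ℝ) (φ := fun _ : Fin n => ℝ)))
      with hY₀def
    have hY₀mem : ∀ x, x ∈ Y₀ ↔ x ∈ Y ∧ ∀ i, u i ≠ 0 → x i = 0 := by
      intro x
      simp [hY₀def, Submodule.mem_iInf, Set.mem_setOf_eq]
    have hY₀lat : ∀ x ∈ Y₀, ∀ y ∈ Y₀, x ⊔ y ∈ Y₀ := by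
      intro x hx y hy
      rw [hY₀mem] at hx hy ⊢
      refine ⟨hlat _ hx.1 _ hy.1, fun i hi => ?_⟩
      simp [Pi.sup_apply, hx.2 i hi, hy.2 i hi]
    have hY₀le : Y₀ ≤ Y := inf_le_left
    -- decomposition Y = span {u} ⊔ Y₀
    have hsplit : ∀ x ∈ Y, ∃ c : ℝ, x - c • u ∈ Y₀ := by
      intro x hx
      obtain ⟨c, hc⟩ := hdec x hx
      refine ⟨c, (hY₀mem _).mpr ⟨Y.sub_mem hx (Y.smul_mem c huY), fun i hi => ?_⟩⟩
      simp [hc i hi]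
    have huY₀ : u ∉ Y₀ := by
      intro h
      rw [hY₀mem] at h
      rcases Function.ne_iff.mp hune with ⟨i, hi⟩
      exact hi (h.2 i (by simpa using hi))
    have hlt : Y₀ < Y := lt_of_le_of_ne hY₀le (fun h => huY₀ (h ▸ huY))
    have hrank_lt : Module.finrank ℝ Y₀ < d + 1 := hd ▸ Submodule.finrank_lt_finrank_of_lt hlt
    have hsup : Y ≤ (Submodule.span ℝ {u} : Submodule ℝ (Fin n → ℝ)) ⊔ Y₀ := by
      intro x hx
      obtain ⟨c, hc⟩ := hsplit x hx
      have : x = c • u + (x - c • u) := by ring_nf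
      rw [this]
      exact Submodule.add_mem _
        (Submodule.mem_sup_left (Submodule.smul_mem _ c (Submodule.mem_span_singleton_self u)))
        (Submodule.mem_sup_right hc)
    have hrank_ge : d + 1 ≤ 1 + Module.finrank ℝ Y₀ := by
      calc d + 1 = Module.finrank ℝ Y := hd.symm
        _ ≤ Module.finrank ℝ ↥((Submodule.span ℝ {u} : Submodule ℝ (Fin n → ℝ)) ⊔ Y₀) := Submodule.finrank_mono hsup
        _ ≤ Module.finrank ℝ ↥(Submodule.span ℝ ({u} : Set (Fin n → ℝ))) + Module.finrank ℝ Y₀ := by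
            have := Submodule.finrank_sup_add_finrank_inf_eq (Submodule.span ℝ ({u} : Set (Fin n → ℝ))) Y₀
            omega
        _ = 1 + Module.finrank ℝ Y₀ := by rw [finrank_span_singleton hune]
    have hrank : Module.finrank ℝ Y₀ = d := by omega
    obtain ⟨u₀, h0Y, h0pos, h0ne, h0disj, h0span⟩ := ih Y₀ hrank hY₀lat
    refine ⟨Fin.cons u u₀, ?_, ?_, ?_, ?_, ?_⟩
    · intro j
      refine Fin.cases ?_ ?_ j
      · simpa using huY
      · intro j'
        simpa using hY₀le (h0Y j')
    · intro j
      refine Fin.cases ?_ ?_ j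
      · simpa using hupos
      · intro j'; simpa using h0pos j'
    · intro j
      refine Fin.cases ?_ ?_ j
      · simpa using hune
      · intro j'; simpa using h0ne j'
    · intro j j' hjj' i
      rcases Fin.eq_zero_or_eq_succ j with rfl | ⟨a, rfl⟩ <;>
        rcases Fin.eq_zero_or_eq_succ j' with rfl | ⟨b, rfl⟩
      · exact absurd rfl hjj'
      · by_cases hui : u i = 0
        · left; simpa using hui
        · right
          simpa using ((hY₀mem _).mp (h0Y b)).2 i hui
      · by_cases hui : u i = 0
        · right; simpa using hui
        · left
          simpa using ((hY₀mem _).mp (h0Y a)).2 i hui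
      · have hab : a ≠ b := fun h => hjj' (by rw [h])
        simpa using h0disj a b hab i
    · intro x hx
      obtain ⟨c, hc⟩ := hsplit x hx
      have hx0 : x - c • u ∈ Submodule.span ℝ (Set.range u₀) := h0span _ hc
      have hsub : Set.range u₀ ⊆ Set.range (Fin.cons u u₀ : Fin (d+1) → Fin n → ℝ) := by
        rintro _ ⟨j, rfl⟩
        exact ⟨j.succ, by simp⟩
      have h1 : x - c • u ∈ Submodule.span ℝ (Set.range (Fin.cons u u₀ : Fin (d+1) → Fin n → ℝ)) :=
        Submodule.span_mono hsub hx0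
      have h2 : u ∈ Submodule.span ℝ (Set.range (Fin.cons u u₀ : Fin (d+1) → Fin n → ℝ)) :=
        Submodule.subset_span ⟨0, by simp⟩
      have : x = c • u + (x - c • u) := by ring_nf
      rw [this]
      exact Submodule.add_mem _ (Submodule.smul_mem _ c h2) h1

/-- A sublattice of `ℝⁿ` of codimension `m` contains at least `n - 2m` and at most `n - m`
of the standard unit vectors. -/
theorem stmt16 {n : ℕ} (Y : Submodule ℝ (Fin n → ℝ))
    (hlat : ∀ x ∈ Y, ∀ y ∈ Y, x ⊔ y ∈ Y)
    (m : ℕ) (hm : Module.finrank ℝ ((Fin n → ℝ) ⧸ Y) = m) :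
    n - 2 * m ≤ {i : Fin n | (Pi.single i 1 : Fin n → ℝ) ∈ Y}.ncard ∧
      {i : Fin n | (Pi.single i 1 : Fin n → ℝ) ∈ Y}.ncard ≤ n - m := by
  classical
  set d := Module.finrank ℝ Y with hd
  have hdm : m + d = n := by
    have h := Submodule.finrank_quotient_add_finrank Y
    rw [hm, Module.finrank_pi] at h
    simpa using h
  set SF : Finset (Fin n) := Finset.univ.filter (fun i => (Pi.single i 1 : Fin n → ℝ) ∈ Y)
    with hSF
  have hkcard : {i : Fin n | (Pi.single i 1 : Fin n → ℝ) ∈ Y}.ncard = SF.card := by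
    rw [← Set.ncard_coe_finset]
    congr 1
    ext i
    simp [hSF]
  -- upper bound: the good unit vectors are independent elements of Y
  have hupper : SF.card ≤ d := by
    have hmem : ∀ i : {i // i ∈ SF}, (Pi.single (i : Fin n) (1:ℝ) : Fin n → ℝ) ∈ Y := by
      intro i
      have h := i.2
      simp only [hSF, Finset.mem_filter] at h
      exact h.2
    have hli : LinearIndependent ℝ
        (fun i : {i // i ∈ SF} => (Pi.single (i : Fin n) (1:ℝ) : Fin n → ℝ)) := by
      have h1 := (Pi.basisFun ℝ (Fin n)).linearIndependent
      have h2 := h1.comp (Subtype.val : {i // i ∈ SF} → Fin n) Subtype.val_injective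
      have : (⇑(Pi.basisFun ℝ (Fin n)) ∘ (Subtype.val : {i // i ∈ SF} → Fin n)) =
          fun i : {i // i ∈ SF} => (Pi.single (i : Fin n) (1:ℝ) : Fin n → ℝ) := by
        funext i
        simp [Pi.basisFun_apply]
      rwa [this] at h2
    have hli2 : LinearIndependent ℝ
        (fun i : {i // i ∈ SF} => (⟨Pi.single (i : Fin n) 1, hmem i⟩ : Y)) := by
      apply LinearIndependent.of_comp Y.subtype
      convert hli
      rfl
    have h := hli2.fintype_card_le_finrank
    simpa [Fintype.card_coe] using h
  -- lower bound via the structure theorem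
  obtain ⟨u, huY, hupos, hune, hdisj, -⟩ := stmt16_structure d Y hd.symm hlat
  set T : Fin d → Finset (Fin n) := fun j => Finset.univ.filter (fun i => u j i ≠ 0) with hT
  have hTmem : ∀ j i, i ∈ T j ↔ u j i ≠ 0 := by intro j i; simp [hT]
  have hTne : ∀ j, (T j).Nonempty := by
    intro j
    rcases Function.ne_iff.mp (hune j) with ⟨i, hi⟩
    exact ⟨i, (hTmem j i).mpr (by simpa using hi)⟩
  have hTdisj : ∀ j j', j ≠ j' → Disjoint (T j) (T j') := by
    intro j j' hjj'
    rw [Finset.disjoint_left]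
    intro i hi hi'
    rcases hdisj j j' hjj' i with h | h
    · exact (hTmem j i).mp hi h
    · exact (hTmem j' i).mp hi' h
  have hsum : ∑ j, (T j).card ≤ n := by
    have h1 : (Finset.univ.biUnion T).card = ∑ j, (T j).card :=
      Finset.card_biUnion (fun j _ j' _ h => hTdisj j j' h)
    calc ∑ j, (T j).card = (Finset.univ.biUnion T).card := h1.symm
      _ ≤ Fintype.card (Fin n) := Finset.card_le_univ _
      _ = n := by simp
  set f : Fin d → Fin n := fun j => (T j).min' (hTne j) with hf
  have hfmem : ∀ j, f j ∈ T j := fun j => (T j).min'_mem (hTne j)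
  set G : Finset (Fin d) := Finset.univ.filter (fun j => (T j).card = 1) with hG
  have hGsub : ∀ j ∈ G, f j ∈ SF := by
    intro j hj
    rw [hG, Finset.mem_filter] at hj
    obtain ⟨a, ha⟩ := Finset.card_eq_one.mp hj.2
    have hfa : f j = a := by
      have := hfmem j
      rw [ha, Finset.mem_singleton] at this
      exact this
    have hzero : ∀ i, i ≠ f j → u j i = 0 := by
      intro i hi
      by_contra hne
      have : i ∈ T j := (hTmem j i).mpr hne
      rw [ha, Finset.mem_singleton] at this
      exact hi (this.trans hfa.symm)
    have hval : u j (f j) ≠ 0 := (hTmem _ _).mp (hfmem j)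
    have : (Pi.single (f j) 1 : Fin n → ℝ) = (u j (f j))⁻¹ • u j := by
      funext i
      rcases eq_or_ne i (f j) with rfl | hib
      · simp only [Pi.single_eq_same, Pi.smul_apply, smul_eq_mul]
        exact (inv_mul_cancel₀ hval).symm
      · simp [Pi.single_eq_of_ne hib, hzero i hib]
    rw [hSF, Finset.mem_filter]
    exact ⟨Finset.mem_univ _, this ▸ Y.smul_mem _ (huY j)⟩
  have hGcard : G.card ≤ SF.card := by
    apply Finset.card_le_card_of_injOn f hGsub
    intro j hj j' hj' hfe
    by_contra hne
    have hd2 := hTdisj j j' hne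
    rw [Finset.disjoint_left] at hd2
    exact hd2 (hfmem j) (hfe ▸ hfmem j')
  have hcount : 2 * d ≤ (∑ j, (T j).card) + G.card := by
    have hGsum : G.card = ∑ j, (if (T j).card = 1 then 1 else 0) := by
      rw [hG, Finset.card_filter]
    have hpt : ∀ j : Fin d, 2 ≤ (T j).card + (if (T j).card = 1 then 1 else 0) := by
      intro j
      have h1 : 1 ≤ (T j).card := Finset.card_pos.mpr (hTne j)
      by_cases h : (T j).card = 1
      · simp [h]
      · have : 2 ≤ (T j).card := by omega
        omega
    calc 2 * d = ∑ _j : Fin d, 2 := by simp [mul_comm]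
      _ ≤ ∑ j, ((T j).card + (if (T j).card = 1 then 1 else 0)) :=
          Finset.sum_le_sum (fun j _ => hpt j)
      _ = (∑ j, (T j).card) + G.card := by rw [Finset.sum_add_distrib, hGsum]
  have hlower : 2 * d ≤ n + SF.card := by omega
  rw [hkcard]
  omega
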